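/- For t > 0 and real ξ, ξ₁, ξ₂ with (ξ−ξ₁)(ξ−ξ₂) ≠ 0 and (ξ−ξ₁)(ξ₁+ξ₂) ≠ 0, define ϱ(t, ξ, ξ₁, ξ₂) := (e^{2it(ξ−ξ₁)(ξ−ξ₂)} − 1)/(2(ξ−ξ₁)(ξ−ξ₂)) − (e^{2it(ξ−ξ₁)(ξ₁+ξ₂)} − 1)/((ξ−ξ₁)(ξ₁+ξ₂)). Then there exists κ₀ ∈ (0,1) such that for every κ ∈ (0, κ₀] there exists k₀ such that for all real k ≥ k₀, setting t = κ/k², for all ξ ∈ [1/2, 1] and all ξ₁, ξ₂ ∈ [k + 1/8, k + 1/4], one has −Im ϱ(t, ξ, ξ₁, ξ₂) ≥ t/2. -/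

import Mathlib

/-- The oscillatory kernel
`ϱ(t,ξ,ξ₁,ξ₂) = (e^{2it(ξ−ξ₁)(ξ−ξ₂)} − 1)/(2(ξ−ξ₁)(ξ−ξ₂))
              − (e^{2it(ξ−ξ₁)(ξ₁+ξ₂)} − 1)/((ξ−ξ₁)(ξ₁+ξ₂))`. -/
noncomputable def varrho (t ξ ξ₁ ξ₂ : ℝ) : ℂ :=
  (Complex.exp (2 * Complex.I * (t : ℂ) * ((ξ - ξ₁ : ℝ) : ℂ) * ((ξ - ξ₂ : ℝ) : ℂ)) - 1)
      / (2 * ((ξ - ξ₁ : ℝ) : ℂ) * ((ξ - ξ₂ : ℝ) : ℂ))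
    - (Complex.exp (2 * Complex.I * (t : ℂ) * ((ξ - ξ₁ : ℝ) : ℂ) * ((ξ₁ + ξ₂ : ℝ) : ℂ)) - 1)
      / (((ξ - ξ₁ : ℝ) : ℂ) * ((ξ₁ + ξ₂ : ℝ) : ℂ))

lemma im_aux (θ c : ℝ) :
    ((Complex.exp ((θ : ℂ) * Complex.I) - 1) / (c : ℂ)).im = Real.sin θ / c := by
  rw [Complex.div_ofReal_im, Complex.exp_mul_I]
  simp [Complex.sin_ofReal_re]

lemma varrho_im (t ξ ξ₁ ξ₂ : ℝ) :
    (varrho t ξ ξ₁ ξ₂).im =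
      Real.sin (2*t*(ξ-ξ₁)*(ξ-ξ₂)) / (2*(ξ-ξ₁)*(ξ-ξ₂))
      - Real.sin (2*t*(ξ-ξ₁)*(ξ₁+ξ₂)) / ((ξ-ξ₁)*(ξ₁+ξ₂)) := by
  unfold varrho
  rw [show 2 * Complex.I * (t : ℂ) * ((ξ - ξ₁ : ℝ) : ℂ) * ((ξ - ξ₂ : ℝ) : ℂ)
      = ((2*t*(ξ-ξ₁)*(ξ-ξ₂) : ℝ) : ℂ) * Complex.I by push_cast; ring,
    show 2 * Complex.I * (t : ℂ) * ((ξ - ξ₁ : ℝ) : ℂ) * ((ξ₁ + ξ₂ : ℝ) : ℂ)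
      = ((2*t*(ξ-ξ₁)*(ξ₁+ξ₂) : ℝ) : ℂ) * Complex.I by push_cast; ring,
    show (2 * ((ξ - ξ₁ : ℝ) : ℂ) * ((ξ - ξ₂ : ℝ) : ℂ)) = ((2*(ξ-ξ₁)*(ξ-ξ₂) : ℝ) : ℂ) by push_cast; ring,
    show (((ξ - ξ₁ : ℝ) : ℂ) * ((ξ₁ + ξ₂ : ℝ) : ℂ)) = (((ξ-ξ₁)*(ξ₁+ξ₂) : ℝ) : ℂ) by push_cast; ring,
    Complex.sub_im, im_aux, im_aux]

set_option maxHeartbeats 1000000 in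
/-- There is `κ₀ ∈ (0,1)` such that for every `κ ∈ (0,κ₀]` there is `k₀` with: for all `k ≥ k₀`,
setting `t = κ/k²`, for all `ξ ∈ [1/2,1]` and `ξ₁, ξ₂ ∈ [k+1/8, k+1/4]`,
`−Im ϱ(t,ξ,ξ₁,ξ₂) ≥ t/2`. -/
theorem stmt_14 :
    ∃ κ₀ ∈ Set.Ioo (0 : ℝ) 1, ∀ κ ∈ Set.Ioc (0 : ℝ) κ₀, ∃ k₀ : ℝ, ∀ k ≥ k₀,
      ∀ ξ ∈ Set.Icc (1 / 2 : ℝ) 1,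
      ∀ ξ₁ ∈ Set.Icc (k + 1 / 8) (k + 1 / 4),
      ∀ ξ₂ ∈ Set.Icc (k + 1 / 8) (k + 1 / 4),
        (κ / k ^ 2) / 2 ≤ -(varrho (κ / k ^ 2) ξ ξ₁ ξ₂).im := by
  refine ⟨1/20, ⟨by norm_num, by norm_num⟩, ?_⟩
  rintro κ ⟨hκ0, hκ⟩
  refine ⟨1, ?_⟩
  rintro k hk ξ ⟨hξ1, hξ2⟩ ξ₁ ⟨hξ₁1, hξ₁2⟩ ξ₂ ⟨hξ₂1, hξ₂2⟩
  have hk0 : (0:ℝ) < k := lt_of_lt_of_le one_pos hk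
  set t := κ / k ^ 2 with ht
  have hk2 : (0:ℝ) < k ^ 2 := by positivity
  have ht0 : 0 < t := by positivity
  have htk : t * k ^ 2 = κ := div_mul_cancel₀ _ (ne_of_gt hk2)
  set p := ξ₁ - ξ with hpdef
  set q := ξ₂ - ξ with hqdef
  set s := ξ₁ + ξ₂ with hsdef
  have hp0 : (1/8:ℝ) ≤ p := by simp only [hpdef]; linarith
  have hq0 : (1/8:ℝ) ≤ q := by simp only [hqdef]; linarith
  have hpk : p ≤ k := by simp only [hpdef]; linarith
  have hs0 : (0:ℝ) < s := by simp only [hsdef]; linarith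
  have hsk : s ≤ 3 * k := by simp only [hsdef]; linarith
  rw [varrho_im]
  have e1 : Real.sin (2*t*(ξ-ξ₁)*(ξ₁+ξ₂)) / ((ξ-ξ₁)*(ξ₁+ξ₂))
      = Real.sin (2*t*p*s) / (p*s) := by
    rw [show 2*t*(ξ-ξ₁)*(ξ₁+ξ₂) = -(2*t*p*s) by simp only [hpdef, hsdef]; ring,
      Real.sin_neg,
      show (ξ-ξ₁)*(ξ₁+ξ₂) = -(p*s) by simp only [hpdef, hsdef]; ring,
      neg_div_neg_eq]
  have e2 : Real.sin (2*t*(ξ-ξ₁)*(ξ-ξ₂)) / (2*(ξ-ξ₁)*(ξ-ξ₂))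
      = Real.sin (2*t*p*q) / (2*(p*q)) := by
    rw [show 2*t*(ξ-ξ₁)*(ξ-ξ₂) = 2*t*p*q by simp only [hpdef, hqdef]; ring,
      show 2*(ξ-ξ₁)*(ξ-ξ₂) = 2*(p*q) by simp only [hpdef, hqdef]; ring]
  rw [e1, e2]
  set C := 2*t*p*s with hCdef
  have hC0 : 0 < C := by positivity
  have hC : C ≤ 3/10 := by
    have hps : p * s ≤ 3 * k ^ 2 := by nlinarith
    have h6 : 2 * t * (p * s) ≤ 2 * t * (3 * k ^ 2) :=
      mul_le_mul_of_nonneg_left hps (by positivity)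
    calc C = 2 * t * (p * s) := by rw [hCdef]; ring
      _ ≤ 2 * t * (3 * k ^ 2) := h6
      _ = 6 * κ := by rw [← htk]; ring
      _ ≤ 3/10 := by linarith
  have hsin : C - C ^ 3 / 4 < Real.sin C :=
    by have := Real.sin_gt_sub_cube hC0; linarith [pow_pos hC0 3]
  have h2 : 2*t - t*C^2/2 ≤ Real.sin C / (p*s) := by
    rw [le_div_iff₀ (by positivity)]
    have : (2*t - t*C^2/2) * (p*s) = C - C^3/4 := by
      simp only [hCdef]; ring
    linarith
  have hA0 : (0:ℝ) ≤ 2*t*p*q := by positivity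
  have h1 : Real.sin (2*t*p*q) / (2*(p*q)) ≤ t := by
    rw [div_le_iff₀ (by positivity)]
    have := Real.sin_le hA0
    nlinarith
  have hC2 : C ^ 2 ≤ 1 := by nlinarith
  have h3 : t * C ^ 2 ≤ t * 1 := mul_le_mul_of_nonneg_left hC2 (le_of_lt ht0)
  linarith
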